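/- Let G = NS₂^ℓ × ℤ^p × (ℤ/2ℤ)^q where NS₂ is the Klein bottle group. Then every subgroup H of G satisfies rank(H) ≤ rank(G) = 2ℓ + p + q. -/

import Mathlib

/-- The single defining relator `a b a⁻¹ b` of the Klein bottle group. -/
def kleinRels : Set (FreeGroup (Fin 2)) :=
  {FreeGroup.of 0 * FreeGroup.of 1 * (FreeGroup.of 0)⁻¹ * FreeGroup.of 1}

/-- The Klein bottle group `NS₂ = ⟨a, b ∣ a b a⁻¹ b⟩`. -/
abbrev KleinBottleGroup : Type := PresentedGroup kleinRels

/-- The group `G = NS₂^ℓ × ℤ^p × (ℤ/2ℤ)^q`. -/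
abbrev EuclideanProductGroup (l p q : ℕ) : Type :=
  (Fin l → KleinBottleGroup) × (Fin p → Multiplicative ℤ) ×
    (Fin q → Multiplicative (ZMod 2))

open Subgroup Multiplicative



/-- `NGen n G`: every subgroup of `G` is generated by at most `n` elements. -/
def NGen (n : ℕ) (G : Type*) [Group G] : Prop :=
  ∀ H : Subgroup G, ∃ S : Finset G, S.card ≤ n ∧ Subgroup.closure (S : Set G) = H

section Generic

variable {G Q : Type*} [Group G] [Group Q]

lemma exists_gen_of_map (f : G →* Q) (H : Subgroup G) {m n : ℕ}
    (hT : ∃ T : Finset Q, T.card ≤ m ∧ closure (T : Set Q) = H.map f)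
    (hS : ∃ S : Finset G, S.card ≤ n ∧ closure (S : Set G) = H ⊓ f.ker) :
    ∃ U : Finset G, U.card ≤ m + n ∧ closure (U : Set G) = H := by
  classical
  obtain ⟨T, hTc, hTcl⟩ := hT
  obtain ⟨S, hSc, hScl⟩ := hS
  have hTmem : ∀ t ∈ T, ∃ g, g ∈ H ∧ f g = t := by
    intro t ht
    have : t ∈ H.map f := hTcl ▸ subset_closure ht
    obtain ⟨g, hg, hfg⟩ := this
    exact ⟨g, hg, hfg⟩
  choose lift hliftH hliftf using hTmem
  set T' : Finset G := T.attach.image (fun t => lift t.1 t.2) with hT'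
  set U : Finset G := T' ∪ S with hU
  have hSsub : (S : Set G) ⊆ (H ⊓ f.ker : Subgroup G) := by
    rw [← hScl]; exact subset_closure
  have hUle : closure (U : Set G) ≤ H := by
    rw [closure_le]
    intro x hx
    rcases Finset.mem_union.1 hx with hx | hx
    · obtain ⟨t, _, rfl⟩ := Finset.mem_image.1 hx
      exact hliftH t.1 t.2
    · exact (hSsub hx).1
  refine ⟨U, ?_, le_antisymm hUle ?_⟩
  · calc U.card ≤ T'.card + S.card := Finset.card_union_le _ _
      _ ≤ T.card + S.card := by
          gcongr
          exact (Finset.card_image_le).trans (by simp)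
      _ ≤ m + n := by omega
  · intro h hh
    have h1 : f h ∈ closure (T : Set Q) := by rw [hTcl]; exact ⟨h, hh, rfl⟩
    have h2 : closure (T : Set Q) ≤ (closure (U : Set G)).map f := by
      rw [closure_le]
      intro t ht
      refine ⟨lift t ht, subset_closure ?_, hliftf t ht⟩
      exact Finset.mem_union_left _ (Finset.mem_image.2 ⟨⟨t, ht⟩, Finset.mem_attach _ _, rfl⟩)
    obtain ⟨u, hu, hfu⟩ := h2 h1
    have huH : u ∈ H := hUle hu
    have : h * u⁻¹ ∈ H ⊓ f.ker := by
      refine ⟨H.mul_mem hh (H.inv_mem huH), ?_⟩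
      simp [MonoidHom.mem_ker, hfu]
    have h3 : h * u⁻¹ ∈ closure (U : Set G) := by
      rw [← hScl] at this
      refine Subgroup.closure_mono ?_ this
      exact_mod_cast (Finset.subset_union_right : S ⊆ U)
    have := mul_mem h3 hu
    simpa using this


section Comb
variable {G Q : Type*} [Group G] [Group Q]

variable {G Q : Type*} [Group G] [Group Q]

lemma ngen_of_hom {m n : ℕ} (f : G →* Q) (hQ : NGen m Q) (hker : NGen n f.ker) :
    NGen (m + n) G := by
  classical
  intro H
  refine exists_gen_of_map f H (hQ (H.map f)) ?_
  obtain ⟨S', hc, hcl⟩ := hker ((H ⊓ f.ker).subgroupOf f.ker)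
  refine ⟨S'.image f.ker.subtype, le_trans (Finset.card_image_le) hc, ?_⟩
  rw [Finset.coe_image, ← MonoidHom.map_closure, hcl, subgroupOf_map_subtype,
    inf_assoc, inf_idem]

lemma ngen_equiv {n : ℕ} (e : G ≃* Q) (h : NGen n G) : NGen n Q := by
  classical
  intro H
  obtain ⟨S, hc, hcl⟩ := h (H.comap (e : G →* Q))
  refine ⟨S.image e, le_trans (Finset.card_image_le) hc, ?_⟩
  rw [Finset.coe_image, show (⇑e '' ↑S) = ⇑(e : G →* Q) '' ↑S from rfl,
    ← MonoidHom.map_closure, hcl]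
  ext x
  constructor
  · rintro ⟨g, hg, rfl⟩; exact hg
  · intro hx; exact ⟨e.symm x, by simpa using hx, by simp⟩

lemma ngen_cyclic [IsCyclic G] : NGen 1 G := by
  intro H
  obtain ⟨g, hg⟩ := IsCyclic.exists_generator (α := H)
  refine ⟨{(g : G)}, by simp, ?_⟩
  rw [Finset.coe_singleton, ← zpowers_eq_closure]
  apply le_antisymm
  · exact (zpowers_le).2 g.2
  · intro x hx
    obtain ⟨n, hn⟩ := hg ⟨x, hx⟩
    exact ⟨n, congrArg Subtype.val hn⟩

lemma ngen_subsingleton [Subsingleton G] : NGen 0 G := by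
  intro H
  refine ⟨∅, le_rfl, ?_⟩
  simp only [Finset.coe_empty, Subgroup.closure_empty]
  ext x
  rw [Subsingleton.elim x 1]
  simp [H.one_mem]

def kerFstEquiv (A B : Type*) [Group A] [Group B] : B ≃* (MonoidHom.fst A B).ker where
  toFun b := ⟨(1, b), rfl⟩
  invFun x := x.1.2
  left_inv b := rfl
  right_inv x := Subtype.ext (Prod.ext (by exact x.2.symm) rfl)
  map_mul' a b := Subtype.ext (Prod.ext (by simp) rfl)

lemma ngen_prod {m n : ℕ} {A B : Type*} [Group A] [Group B]
    (hA : NGen m A) (hB : NGen n B) : NGen (m + n) (A × B) :=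
  ngen_of_hom (MonoidHom.fst A B) hA (ngen_equiv (kerFstEquiv A B) hB)

def piSuccEquiv (k : ℕ) (G : Type*) [Group G] : (Fin (k+1) → G) ≃* G × (Fin k → G) :=
  { (Fin.consEquiv (fun _ : Fin (k+1) => G)).symm with map_mul' := fun _ _ => rfl }

lemma ngen_pi {n : ℕ} (h : NGen n G) : ∀ k, NGen (k * n) (Fin k → G)
  | 0 => by simpa using (ngen_subsingleton : NGen 0 (Fin 0 → G))
  | (k+1) => by
      have := ngen_prod h (ngen_pi h k)
      have e := (piSuccEquiv k G).symm
      have := ngen_equiv e this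
      have harith : n + k * n = (k+1) * n := by ring
      rw [harith] at this
      exact this


end Comb

namespace KB

def a : KleinBottleGroup := PresentedGroup.of 0
def b : KleinBottleGroup := PresentedGroup.of 1

lemma key : a * b * a⁻¹ * b = 1 := by
  have h : PresentedGroup.mk kleinRels
      (FreeGroup.of 0 * FreeGroup.of 1 * (FreeGroup.of 0)⁻¹ * FreeGroup.of 1) = 1 := by
    apply (QuotientGroup.eq_one_iff _).2
    exact Subgroup.subset_normalClosure (by simp [kleinRels])
  simpa [a, b, PresentedGroup.of, map_mul, map_inv] using h

lemma key1 : a * b * a⁻¹ = b⁻¹ := by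
  have := key
  rw [← eq_inv_iff_mul_eq_one] at this
  exact this

lemma key2 : a⁻¹ * b * a = b⁻¹ := by
  have h : a⁻¹ * b⁻¹ * a = b := by rw [← key1]; group
  calc a⁻¹ * b * a = (a⁻¹ * b⁻¹ * a)⁻¹ := by group
    _ = b⁻¹ := by rw [h]

lemma conj_sign (n : ℤ) : ∃ ε : ℤ, (ε = 1 ∨ ε = -1) ∧
    ∀ m : ℤ, a ^ n * b ^ m * a ^ (-n) = b ^ (ε * m) := by
  induction n using Int.induction_on with
  | zero => exact ⟨1, Or.inl rfl, fun m => by simpa using by group⟩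
  | succ k ih =>
      obtain ⟨ε, hε, hc⟩ := ih
      refine ⟨-ε, by omega, fun m => ?_⟩
      have h1 : a ^ ((k : ℤ) + 1) * b ^ m * a ^ (-((k : ℤ) + 1))
          = a * (a ^ (k : ℤ) * b ^ m * a ^ (-(k : ℤ))) * a⁻¹ := by group
      rw [h1, hc m]
      have h2 : a * b ^ (ε * m) * a⁻¹ = (a * b * a⁻¹) ^ (ε * m) := (conj_zpow).symm
      rw [h2, key1, inv_zpow]
      rw [← zpow_neg]
      ring_nf
  | pred k ih =>
      obtain ⟨ε, hε, hc⟩ := ih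
      refine ⟨-ε, by omega, fun m => ?_⟩
      have h1 : a ^ (-(k : ℤ) - 1) * b ^ m * a ^ (-(-(k : ℤ) - 1))
          = a⁻¹ * (a ^ (-(k : ℤ)) * b ^ m * a ^ (-(-(k : ℤ)))) * a := by group
      rw [h1, hc m]
      have h2 := conj_zpow (i := ε * m) (a := a⁻¹) (b := b)
      simp only [inv_inv] at h2
      rw [← h2, key2, inv_zpow, ← zpow_neg]
      ring_nf

lemma normal_form (g : KleinBottleGroup) : ∃ m n : ℤ, g = b ^ m * a ^ n := by
  let H : Subgroup KleinBottleGroup :=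
  { carrier := {g | ∃ m n : ℤ, g = b ^ m * a ^ n}
    one_mem' := ⟨0, 0, by simp⟩
    mul_mem' := by
      rintro x y ⟨m, n, rfl⟩ ⟨m', n', rfl⟩
      obtain ⟨ε, -, hc⟩ := conj_sign n
      refine ⟨m + ε * m', n + n', ?_⟩
      have h : a ^ n * b ^ m' = b ^ (ε * m') * a ^ n := by
        have := hc m'
        calc a ^ n * b ^ m' = (a ^ n * b ^ m' * a ^ (-n)) * a ^ n := by group
          _ = b ^ (ε * m') * a ^ n := by rw [this]
      calc b ^ m * a ^ n * (b ^ m' * a ^ n')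
          = b ^ m * (a ^ n * b ^ m') * a ^ n' := by group
        _ = b ^ m * (b ^ (ε * m') * a ^ n) * a ^ n' := by rw [h]
        _ = b ^ (m + ε * m') * a ^ (n + n') := by
            rw [zpow_add, zpow_add]; group
    inv_mem' := by
      rintro x ⟨m, n, rfl⟩
      obtain ⟨ε, -, hc⟩ := conj_sign (-n)
      refine ⟨ε * (-m), -n, ?_⟩
      have := hc (-m)
      calc (b ^ m * a ^ n)⁻¹ = a ^ (-n) * b ^ (-m) := by
            rw [zpow_neg, zpow_neg]; group
        _ = (a ^ (-n) * b ^ (-m) * a ^ (-(-n))) * a ^ (-n) := by group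
        _ = b ^ (ε * (-m)) * a ^ (-n) := by rw [this] }
  have : g ∈ H := PresentedGroup.generated_by kleinRels H
    (by
      intro j
      fin_cases j
      · exact ⟨0, 1, by simp [a]⟩
      · exact ⟨1, 0, by simp [b]⟩) g
  exact this

def fKB : KleinBottleGroup →* Multiplicative ℤ :=
  PresentedGroup.toGroup (f := fun i => if i = 0 then Multiplicative.ofAdd 1 else 1)
    (by
      intro r hr
      simp only [kleinRels, Set.mem_singleton_iff] at hr
      subst hr
      simp [map_mul, map_inv])

lemma fKB_a : fKB a = Multiplicative.ofAdd 1 := by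
  simp [fKB, a, PresentedGroup.toGroup.of]

lemma fKB_b : fKB b = 1 := by
  simp [fKB, b, PresentedGroup.toGroup.of]

lemma ker_le : fKB.ker ≤ zpowers b := by
  intro g hg
  obtain ⟨m, n, rfl⟩ := normal_form g
  have h : fKB (b ^ m * a ^ n) = Multiplicative.ofAdd n := by
    rw [map_mul, map_zpow, map_zpow, fKB_a, fKB_b]
    rw [← ofAdd_zsmul]
    simp
  rw [MonoidHom.mem_ker, h] at hg
  have : n = 0 := by simpa using hg
  subst this
  simpa using zpow_mem (mem_zpowers b) m

lemma isCyclic_zpowers {G : Type*} [Group G] (g : G) : IsCyclic ↥(zpowers g) := by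
  refine ⟨⟨g, mem_zpowers g⟩, fun x => ?_⟩
  obtain ⟨n, hn⟩ := x.2
  exact ⟨n, Subtype.ext (by simpa using hn)⟩

instance : IsCyclic ↥(fKB.ker) :=
  have := isCyclic_zpowers b
  Subgroup.isCyclic_of_le ker_le

end KB



lemma prod_self_eq_one {Γ : Type*} [CommGroup Γ] (hsq : ∀ x : Γ, x * x = 1) (T : Finset Γ) :
    (∏ i ∈ T, i) * (∏ i ∈ T, i) = 1 := by
  rw [← Finset.prod_mul_distrib]
  exact Finset.prod_eq_one fun x _ => hsq x

lemma card_le_of_closure_eq_top {Γ : Type*} [CommGroup Γ]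
    (hsq : ∀ x : Γ, x * x = 1) (S : Finset Γ)
    (h : Subgroup.closure (S : Set Γ) = ⊤) : Nat.card Γ ≤ 2 ^ S.card := by
  classical
  let P : Subgroup Γ :=
  { carrier := {x | ∃ A ∈ S.powerset, ∏ i ∈ A, i = x}
    one_mem' := ⟨∅, by simp⟩
    mul_mem' := by
      rintro x y ⟨A, hA, rfl⟩ ⟨B, hB, rfl⟩
      rw [Finset.mem_powerset] at hA hB
      refine ⟨symmDiff A B, Finset.mem_powerset.2 ?_, ?_⟩
      · rw [symmDiff_def]
        exact sup_le ((sdiff_le : A \ B ≤ A).trans hA) ((sdiff_le : B \ A ≤ B).trans hB)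
      · have hdisj : Disjoint (symmDiff A B) (A ∩ B) := by
          simpa using disjoint_symmDiff_inf A B
        have hcup : (symmDiff A B) ∪ (A ∩ B) = A ∪ B := by
          simpa using symmDiff_sup_inf A B
        calc (∏ i ∈ symmDiff A B, i)
            = (∏ i ∈ symmDiff A B, i) * ((∏ i ∈ A ∩ B, i) * (∏ i ∈ A ∩ B, i)) := by
              rw [prod_self_eq_one hsq, mul_one]
          _ = ((∏ i ∈ symmDiff A B, i) * (∏ i ∈ A ∩ B, i)) * (∏ i ∈ A ∩ B, i) := by
              rw [mul_assoc]
          _ = (∏ i ∈ (symmDiff A B) ∪ (A ∩ B), i) * (∏ i ∈ A ∩ B, i) := by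
              rw [Finset.prod_union hdisj]
          _ = (∏ i ∈ A ∪ B, i) * (∏ i ∈ A ∩ B, i) := by rw [hcup]
          _ = (∏ i ∈ A, i) * (∏ i ∈ B, i) := Finset.prod_union_inter
    inv_mem' := by
      rintro x ⟨A, hA, rfl⟩
      refine ⟨A, hA, ?_⟩
      have := hsq (∏ i ∈ A, i)
      rw [← eq_inv_iff_mul_eq_one] at this
      exact this }
  have hSP : (S : Set Γ) ⊆ P := by
    intro s hs
    exact ⟨{s}, Finset.mem_powerset.2 (by simpa using hs), by simp⟩
  have htop : ∀ x : Γ, x ∈ P := by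
    intro x
    have : x ∈ Subgroup.closure (S : Set Γ) := h ▸ Subgroup.mem_top x
    exact (Subgroup.closure_le P).2 hSP this
  have hsurj : Function.Surjective
      (fun A : {A : Finset Γ // A ∈ S.powerset} => ∏ i ∈ A.1, i) := by
    intro x
    obtain ⟨A, hA, hAx⟩ := htop x
    exact ⟨⟨A, hA⟩, hAx⟩
  calc Nat.card Γ ≤ Nat.card {A : Finset Γ // A ∈ S.powerset} :=
        Nat.card_le_card_of_surjective _ hsurj
    _ = 2 ^ S.card := by
        rw [Nat.card_eq_fintype_card, Fintype.card_coe, Finset.card_powerset]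




def chi1 : KleinBottleGroup →* Multiplicative (ZMod 2 × ZMod 2) :=
  PresentedGroup.toGroup
    (f := fun i => if i = 0 then ofAdd ((1 : ZMod 2), (0 : ZMod 2)) else ofAdd (0, 1))
    (by
      intro r hr
      simp only [kleinRels, Set.mem_singleton_iff] at hr
      subst hr
      simp only [map_mul, map_inv, FreeGroup.lift_apply_of]
      decide)

lemma chi1_surj : Function.Surjective chi1 := by
  intro w
  have h4 : ∀ v : Multiplicative (ZMod 2 × ZMod 2), v = 1 ∨
      v = ofAdd ((1 : ZMod 2), (0 : ZMod 2)) ∨ v = ofAdd (0, 1) ∨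
      v = ofAdd (1, 0) * ofAdd (0, 1) := by decide
  have h4 := h4 w
  have ha : chi1 (PresentedGroup.of 0) = ofAdd ((1 : ZMod 2), (0 : ZMod 2)) := by
    simp [chi1, PresentedGroup.toGroup.of]
  have hb : chi1 (PresentedGroup.of 1) = ofAdd ((0 : ZMod 2), (1 : ZMod 2)) := by
    simp [chi1, PresentedGroup.toGroup.of]
  rcases h4 with rfl | rfl | rfl | rfl
  · exact ⟨1, map_one _⟩
  · exact ⟨PresentedGroup.of 0, ha⟩
  · exact ⟨PresentedGroup.of 1, hb⟩
  · exact ⟨PresentedGroup.of 0 * PresentedGroup.of 1, by rw [map_mul, ha, hb]⟩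

def chi2 : Multiplicative ℤ →* Multiplicative (ZMod 2) :=
  AddMonoidHom.toMultiplicative (Int.castAddHom (ZMod 2))

lemma chi2_surj : Function.Surjective chi2 := by
  intro w
  have h2 : ∀ v : Multiplicative (ZMod 2), v = 1 ∨ v = ofAdd (1 : ZMod 2) := by decide
  have h2 := h2 w
  rcases h2 with rfl | rfl
  · exact ⟨1, map_one _⟩
  · refine ⟨ofAdd (1 : ℤ), ?_⟩
    show ofAdd (((1 : ℤ) : ZMod 2)) = ofAdd (1 : ZMod 2)
    norm_num

def piMapHom {M N : Type*} [Monoid M] [Monoid N] (k : ℕ) (f : M →* N) :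
    (Fin k → M) →* (Fin k → N) := f.compLeft (Fin k)

lemma piMapHom_surj {M N : Type*} [Monoid M] [Monoid N] (k : ℕ) (f : M →* N)
    (hf : Function.Surjective f) : Function.Surjective (piMapHom k f) := by
  intro h
  choose g hg using fun i => hf (h i)
  exact ⟨g, funext hg⟩


lemma ngen_KB : NGen 2 KleinBottleGroup :=
  ngen_of_hom KB.fKB ngen_cyclic ngen_cyclic

lemma ngen_G (l p q : ℕ) : NGen (2 * l + p + q) (EuclideanProductGroup l p q) := by
  have h1 : NGen (l * 2) (Fin l → KleinBottleGroup) := ngen_pi ngen_KB l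
  have h2 : NGen (p * 1) (Fin p → Multiplicative ℤ) := ngen_pi ngen_cyclic p
  have h3 : NGen (q * 1) (Fin q → Multiplicative (ZMod 2)) := ngen_pi ngen_cyclic q
  have h := ngen_prod h1 (ngen_prod h2 h3)
  have harith : l * 2 + (p * 1 + q * 1) = 2 * l + p + q := by ring
  rwa [harith] at h

/-- The elementary abelian 2-group target of the mod-2 abelianization map. -/
abbrev W2 (l p q : ℕ) : Type :=
  (Fin l → Multiplicative (ZMod 2 × ZMod 2)) ×
    (Fin p → Multiplicative (ZMod 2)) × (Fin q → Multiplicative (ZMod 2))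

def chiG (l p q : ℕ) : EuclideanProductGroup l p q →* W2 l p q :=
  (piMapHom l chi1).prodMap ((piMapHom p chi2).prodMap (piMapHom q (MonoidHom.id _)))

lemma chiG_surj (l p q : ℕ) : Function.Surjective (chiG l p q) :=
  (piMapHom_surj l chi1 chi1_surj).prodMap
    ((piMapHom_surj p chi2 chi2_surj).prodMap
      (piMapHom_surj q (MonoidHom.id _) Function.surjective_id))

lemma W2_sq (l p q : ℕ) : ∀ x : W2 l p q, x * x = 1 := by
  have hz2 : ∀ y : Multiplicative (ZMod 2), y * y = 1 := by decide
  have hz22 : ∀ y : Multiplicative (ZMod 2 × ZMod 2), y * y = 1 := by decide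
  intro x
  refine Prod.ext ?_ (Prod.ext ?_ ?_)
  · funext i; exact hz22 _
  · funext i; exact hz2 _
  · funext i; exact hz2 _

lemma W2_card (l p q : ℕ) : Nat.card (W2 l p q) = 2 ^ (2 * l + p + q) := by
  have hm : ∀ (X : Type) [AddGroup X], Nat.card (Multiplicative X) = Nat.card X := by
    intro X _
    exact Nat.card_congr Multiplicative.toAdd
  have h22 : Nat.card (Multiplicative (ZMod 2 × ZMod 2)) = 4 := by
    rw [hm]; rw [Nat.card_prod, Nat.card_zmod]
  have h2 : Nat.card (Multiplicative (ZMod 2)) = 2 := by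
    rw [hm, Nat.card_zmod]
  rw [Nat.card_prod, Nat.card_prod, Nat.card_pi, Nat.card_pi, Nat.card_pi]
  simp only [h22, h2, Finset.prod_const, Finset.card_univ, Fintype.card_fin]
  have : (4 : ℕ) = 2 ^ 2 := rfl
  rw [this, ← pow_mul, ← pow_add, ← pow_add]
  ring_nf

theorem euclidean_rank_bound (l p q : ℕ) :
    (∀ H : Subgroup (EuclideanProductGroup l p q),
      ∃ S : Finset (EuclideanProductGroup l p q),
        S.card ≤ 2 * l + p + q ∧ Subgroup.closure (S : Set (EuclideanProductGroup l p q)) = H) ∧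
    ¬ ∃ S : Finset (EuclideanProductGroup l p q),
        S.card < 2 * l + p + q ∧ Subgroup.closure (S : Set (EuclideanProductGroup l p q)) = ⊤ := by
  constructor
  · exact ngen_G l p q
  · rintro ⟨S, hlt, htop⟩
    classical
    set T : Finset (W2 l p q) := S.image (chiG l p q) with hT
    have hTtop : Subgroup.closure (T : Set (W2 l p q)) = ⊤ := by
      rw [hT, Finset.coe_image, ← MonoidHom.map_closure, htop]
      rw [← MonoidHom.range_eq_map]
      exact MonoidHom.range_eq_top.2 (chiG_surj l p q)
    have hcard := card_le_of_closure_eq_top (W2_sq l p q) T hTtop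
    rw [W2_card l p q] at hcard
    have hTc : T.card ≤ S.card := Finset.card_image_le
    have : (2 : ℕ) ^ (2 * l + p + q) ≤ 2 ^ S.card :=
      hcard.trans (Nat.pow_le_pow_right (by norm_num) hTc)
    have := this.trans_lt (Nat.pow_lt_pow_right (by norm_num) hlt)
    exact lt_irrefl _ this
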